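/- If r is the max Tucker rank (resp. the submax Tucker rank) and X is any nonzero tensor, then there is a subtensor Y ∈ ℝ^{J₁×⋯×J_N} of X such that r(X) = r(Y) = J_n for some mode n. -/

import Mathlib

open scoped BigOperators

/-- An order-`N` real tensor with mode sizes `I n`. -/
abbrev Tensor (N : ℕ) (I : Fin N → ℕ) : Type :=
  ((n : Fin N) → Fin (I n)) → ℝ

/-- A rank-one tensor is an outer product of nonzero vectors. -/
def IsRankOne {N : ℕ} {I : Fin N → ℕ} (X : Tensor N I) : Prop :=
  ∃ a : (n : Fin N) → Fin (I n) → ℝ, (∀ n, a n ≠ 0) ∧ ∀ i, X i = ∏ n, a n (i n)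

/-- The order-`N` identity tensor `I_{M,N}`: ones on the diagonal, zeros elsewhere. -/
def idTensor (M N : ℕ) : Tensor N (fun _ => M) :=
  fun i => if ∀ n m : Fin N, i n = i m then 1 else 0

/-- The matrix associated to a tensor of shape `I₁ × I₂ × 1 × ⋯ × 1`. -/
def assocMatrix {N : ℕ} {I : Fin N → ℕ} (h2 : 2 ≤ N)
    (h1 : ∀ n : Fin N, 2 ≤ n.val → I n = 1) (X : Tensor N I) :
    Matrix (Fin (I ⟨0, by omega⟩)) (Fin (I ⟨1, by omega⟩)) ℝ :=
  Matrix.of fun p q =>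
    X (fun m =>
      if e0 : m = ⟨0, by omega⟩ then Fin.cast (congrArg I e0.symm) p
      else if e1 : m = ⟨1, by omega⟩ then Fin.cast (congrArg I e1.symm) q
      else Fin.cast (h1 m (by
        have v0 : m.val ≠ 0 := fun hh => e0 (Fin.ext hh)
        have v1 : m.val ≠ 1 := fun hh => e1 (Fin.ext hh)
        omega)).symm 0)

/-- Permutation of the modes of a tensor. -/
def permute {N : ℕ} (I : Fin N → ℕ) (π : Equiv.Perm (Fin N)) (X : Tensor N I) :
    Tensor N (fun m => I (π m)) :=
  fun i => X (fun m => Fin.cast (congrArg I (π.apply_symm_apply m)) (i (π.symm m)))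

/-- `Y` is a subtensor of `X` : it is obtained by selecting, in each mode, an
increasing subset of the indices. -/
def IsSubtensor {N : ℕ} {J I : Fin N → ℕ} (Y : Tensor N J) (X : Tensor N I) : Prop :=
  ∃ f : (n : Fin N) → Fin (J n) → Fin (I n),
    (∀ n, StrictMono (f n)) ∧ ∀ i, Y i = X (fun n => f n (i n))

/-- The mode-`n` unfolding of a tensor, as a matrix whose columns are the
mode-`n` fibers. -/
def modeUnfold {N : ℕ} {I : Fin N → ℕ} (X : Tensor N I) (n : Fin N) :
    Matrix (Fin (I n)) ((m : {m : Fin N // m ≠ n}) → Fin (I m.1)) ℝ :=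
  Matrix.of fun p j =>
    X (fun m => if h : m = n then Fin.cast (congrArg I h.symm) p else j ⟨m, h⟩)

/-- The mode-`n` matrix product `X ×ₙ A`. -/
def modeMul {N : ℕ} {I : Fin N → ℕ} (X : Tensor N I) (n : Fin N) {J : ℕ}
    (A : Matrix (Fin J) (Fin (I n)) ℝ) : Tensor N (Function.update I n J) :=
  fun i => ∑ t : Fin (I n),
    A (Fin.cast (by simp) (i n)) t *
      X (fun m =>
        if h : m = n then Fin.cast (congrArg I h.symm) t
        else Fin.cast (by rw [Function.update_of_ne h]) (i m))

/-- Appending a trailing mode of dimension 1 to a tensor. -/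
def snocOne {N : ℕ} {I : Fin N → ℕ} (X : Tensor N I) :
    Tensor (N + 1) (Fin.snoc I 1) :=
  fun i => X (fun m => Fin.cast (by simp) (i m.castSucc))

/-- The matrix associated to a tensor all of whose modes other than `n₁, n₂`
have dimension 1 (a "submatrix" shape). -/
def twoModeMatrix {N : ℕ} {J : Fin N → ℕ} (Z : Tensor N J) (n₁ n₂ : Fin N)
    (h1 : ∀ m, m ≠ n₁ → m ≠ n₂ → J m = 1) : Matrix (Fin (J n₁)) (Fin (J n₂)) ℝ :=
  Matrix.of fun p q =>
    Z (fun m =>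
      if h : m = n₁ then Fin.cast (congrArg J h.symm) p
      else if h' : m = n₂ then Fin.cast (congrArg J h'.symm) q
      else Fin.cast (h1 m h h').symm 0)

/-- A rank function assigns a natural number to every real tensor. -/
def RankFun : Type :=
  ∀ (N : ℕ) (I : Fin N → ℕ), Tensor N I → ℕ

/-- The axioms (QZC1)–(QZC6) of Qi, Zhang and Chen for a tensor rank function. -/
structure IsQZCRankFn (r : RankFun) : Prop where
  zero_iff : ∀ (N : ℕ), 0 < N → ∀ (I : Fin N → ℕ) (X : Tensor N I),
    r N I X = 0 ↔ X = 0
  one_iff : ∀ (N : ℕ), 0 < N → ∀ (I : Fin N → ℕ) (X : Tensor N I),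
    r N I X = 1 ↔ IsRankOne X
  id_eq : ∀ (M N : ℕ), 2 ≤ N → r N (fun _ => M) (idTensor M N) = M
  matrix_eq : ∀ (N : ℕ) (h2 : 2 ≤ N) (I : Fin N → ℕ)
    (h1 : ∀ n : Fin N, 2 ≤ n.val → I n = 1) (X : Tensor N I),
    r N I X = (assocMatrix h2 h1 X).rank
  smul_eq : ∀ (N : ℕ), 0 < N → ∀ (I : Fin N → ℕ) (α : ℝ), α ≠ 0 →
    ∀ (X : Tensor N I), r N I (α • X) = r N I X
  perm_eq : ∀ (N : ℕ), 0 < N → ∀ (I : Fin N → ℕ) (π : Equiv.Perm (Fin N))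
    (X : Tensor N I), r N (fun m => I (π m)) (permute I π X) = r N I X
  subtensor_le : ∀ (N : ℕ), 0 < N → ∀ (I J : Fin N → ℕ) (X : Tensor N I)
    (Y : Tensor N J), IsSubtensor Y X → r N J Y ≤ r N I X

/-- The max Tucker rank: the largest rank of a mode-`n` unfolding. -/
noncomputable def maxTuckerRank : RankFun := fun N _I X =>
  Finset.univ.sup fun n : Fin N => (modeUnfold X n).rank

/-- The submax Tucker rank: the second-largest (with multiplicity) rank of a
mode unfolding, and the unfolding rank itself when `N = 1`. -/
noncomputable def submaxRank : RankFun := fun N _I X =>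
  let s : Multiset ℕ := (Finset.univ : Finset (Fin N)).val.map fun n => (modeUnfold X n).rank
  if N ≤ 1 then s.sup else (s.erase s.sup).sup

open Submodule Set Matrix

section Aux

lemma myrank_submatrix_equiv {m n m' n' : Type*} [Fintype m] [Fintype n] [Fintype m'] [Fintype n']
    (A : Matrix m n ℝ) (e₁ : m' ≃ m) (e₂ : n' ≃ n) :
    (A.submatrix e₁ e₂).rank = A.rank := by
  rw [Matrix.rank, Matrix.rank, Matrix.mulVecLin_submatrix, LinearMap.range_comp,
    LinearMap.range_comp,
    show LinearMap.funLeft ℝ ℝ e₂.symm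
      = (LinearEquiv.funCongrLeft ℝ ℝ e₂.symm : (n' → ℝ) →ₗ[ℝ] (n → ℝ)) from rfl,
    LinearEquiv.range, Submodule.map_top]
  exact LinearEquiv.finrank_map_eq (LinearEquiv.funCongrLeft ℝ ℝ e₁) _

lemma myrank_cols_eq {m n n' : Type*} [Fintype m] [Fintype n] [Fintype n']
    (A : Matrix m n ℝ) (B : Matrix m n' ℝ)
    (h : span ℝ (Set.range Aᵀ) = span ℝ (Set.range Bᵀ)) : A.rank = B.rank := by
  rw [Matrix.rank_eq_finrank_span_cols, Matrix.rank_eq_finrank_span_cols,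
    show span ℝ (Set.range A.col) = span ℝ (Set.range B.col) from h]

lemma myrank_rows_eq {m m' n : Type*} [Fintype m] [Fintype m'] [Fintype n]
    (A : Matrix m n ℝ) (B : Matrix m' n ℝ)
    (h : span ℝ (Set.range A) = span ℝ (Set.range B)) : A.rank = B.rank := by
  rw [Matrix.rank_eq_finrank_span_row, Matrix.rank_eq_finrank_span_row,
    show span ℝ (Set.range A.row) = span ℝ (Set.range B.row) from h]

lemma exists_spanning_rows {a : ℕ} {c : Type*} [Fintype c] (A : Matrix (Fin a) c ℝ) :
    ∃ f : Fin A.rank → Fin a, StrictMono f ∧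
      span ℝ (Set.range (fun q => A (f q))) = span ℝ (Set.range A) := by
  classical
  obtain ⟨s, hsub, hspan, hind⟩ := exists_linearIndependent ℝ (Set.range A)
  have hfin : s.Finite := hind.setFinite
  haveI : Fintype s := hfin.fintype
  have hall : ∀ x : s, ∃ p : Fin a, A p = (x : c → ℝ) := fun x => hsub x.2
  choose pick hpick using hall
  have hpinj : Function.Injective pick := by
    intro x y hxy
    apply Subtype.ext
    rw [← hpick x, ← hpick y, hxy]
  let T : Finset (Fin a) := Finset.univ.image pick
  have hTcard : T.card = A.rank := by
    rw [Finset.card_image_of_injective _ hpinj, Finset.card_univ,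
      Matrix.rank_eq_finrank_span_row, show A.row = A from rfl, ← hspan,
      finrank_span_set_eq_card hind, Set.toFinset_card]
  have himg : A '' ↑T = s := by
    ext y
    constructor
    · rintro ⟨p, hp, rfl⟩
      simp only [T, Finset.coe_image, Set.mem_image, Finset.mem_coe] at hp
      obtain ⟨x, -, rfl⟩ := hp
      rw [hpick x]; exact x.2
    · intro hy
      exact ⟨pick ⟨y, hy⟩, by simp [T], hpick ⟨y, hy⟩⟩
  refine ⟨T.orderEmbOfFin hTcard, (T.orderEmbOfFin hTcard).strictMono, ?_⟩
  have hre : Set.range (fun q => A (T.orderEmbOfFin hTcard q)) = A '' ↑T := by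
    rw [← Finset.range_orderEmbOfFin T hTcard]
    exact Set.range_comp (g := A) (f := T.orderEmbOfFin hTcard)
  rw [hre, himg, hspan]

lemma Multiset.sup_mem_of_ne_zero {s : Multiset ℕ} (h : s ≠ 0) : s.sup ∈ s := by
  induction s using Multiset.induction with
  | empty => exact absurd rfl h
  | cons a t ih =>
    rw [Multiset.sup_cons]
    rcases eq_or_ne t 0 with rfl | ht
    · simp
    · rcases le_total a t.sup with h1 | h1
      · rw [sup_eq_right.2 h1]; exact Multiset.mem_cons_of_mem (ih ht)
      · rw [sup_eq_left.2 h1]; exact Multiset.mem_cons_self a t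

lemma cast_strictMono {a b : ℕ} (h : a = b) : StrictMono (Fin.cast h) :=
  fun x y hxy => by simp only [Fin.lt_def, Fin.coe_cast]; exact hxy

end Aux

section Construction

variable {N : ℕ} {I : Fin N → ℕ}

/-- The new shape: mode `n` gets size `R`, others unchanged. -/
def Jshape (I : Fin N → ℕ) (n : Fin N) (R : ℕ) : Fin N → ℕ := fun m => if m = n then R else I m

lemma Jshape_n (n : Fin N) (R : ℕ) : Jshape I n R n = R := if_pos rfl

lemma Jshape_ne {n m : Fin N} (R : ℕ) (h : m ≠ n) : Jshape I n R m = I m := if_neg h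

/-- Index selection maps. -/
def selF (n : Fin N) {R : ℕ} (f : Fin R → Fin (I n)) :
    (m : Fin N) → Fin (Jshape I n R m) → Fin (I m) := fun m =>
  if h : m = n then
    fun q => Fin.cast (congrArg I h).symm (f (Fin.cast (by rw [h]; exact Jshape_n n R) q))
  else fun q => Fin.cast (Jshape_ne R h) q

lemma selF_val_ne (n : Fin N) {R : ℕ} (f : Fin R → Fin (I n)) {m : Fin N} (h : m ≠ n)
    (q : Fin (Jshape I n R m)) : (selF n f m q : ℕ) = (q : ℕ) := by
  unfold selF
  rw [dif_neg h]
  simp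

lemma selF_val_n (n : Fin N) {R : ℕ} (f : Fin R → Fin (I n))
    (q : Fin (Jshape I n R n)) : (selF n f n q : ℕ) = (f (Fin.cast (Jshape_n n R) q) : ℕ) := by
  unfold selF
  rw [dif_pos rfl]
  simp

lemma selF_strictMono (n : Fin N) {R : ℕ} {f : Fin R → Fin (I n)} (hf : StrictMono f)
    (m : Fin N) : StrictMono (selF n f m) := by
  unfold selF
  rcases eq_or_ne m n with rfl | h
  · simp only [dif_pos rfl]
    exact (cast_strictMono _).comp (hf.comp (cast_strictMono _))
  · simp only [dif_neg h]
    exact cast_strictMono _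

/-- The subtensor. -/
def subTensor (X : Tensor N I) (n : Fin N) {R : ℕ} (f : Fin R → Fin (I n)) :
    Tensor N (Jshape I n R) := fun i => X (fun m => selF n f m (i m))

end Construction

lemma key_subtensor {N : ℕ} {I : Fin N → ℕ} (X : Tensor N I) (n : Fin N) :
    ∃ (J : Fin N → ℕ) (Y : Tensor N J), IsSubtensor Y X ∧ J n = (modeUnfold X n).rank ∧
      ∀ m, (modeUnfold Y m).rank = (modeUnfold X m).rank := by
  classical
  obtain ⟨f, hfmono, hfspan⟩ := exists_spanning_rows (modeUnfold X n)
  refine ⟨Jshape I n (modeUnfold X n).rank, subTensor X n f,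
    ⟨selF n f, selF_strictMono n hfmono, fun i => rfl⟩, Jshape_n n _, ?_⟩
  intro m
  rcases eq_or_ne m n with h | hm
  · -- mode n
    subst h
    have hYn : modeUnfold (subTensor X m f) m
        = ((modeUnfold X m).submatrix f id).submatrix (finCongr (Jshape_n m _))
          (Equiv.piCongrRight (fun k : {k : Fin N // k ≠ m} => finCongr (Jshape_ne _ k.2))) := by
      apply Matrix.ext
      intro p j
      show X _ = X _
      congr 1
      funext k
      rcases eq_or_ne k m with h | h
      · subst h
        simp only [modeUnfold, subTensor, selF, Matrix.submatrix_apply, Matrix.of_apply,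
          dif_pos rfl, Equiv.piCongrRight_apply, finCongr_apply]
        apply Fin.ext
        simp
        rfl
      · simp only [modeUnfold, subTensor, selF, Matrix.submatrix_apply, Matrix.of_apply,
          dif_neg h, Equiv.piCongrRight_apply, finCongr_apply, Pi.map_apply]
        apply Fin.ext
        simp
        exact congrArg (fun x => (Fin.cast (Jshape_ne _ h) x : ℕ)) (dif_neg h)
    rw [hYn, myrank_submatrix_equiv]
    exact myrank_rows_eq _ _ hfspan
  · -- mode m ≠ n
    have hYm : modeUnfold (subTensor X n f) m
        = ((modeUnfold X m).submatrix id (fun j (k : {k : Fin N // k ≠ m}) => selF n f k.1 (j k))).submatrix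
            (finCongr (Jshape_ne _ hm)) (Equiv.refl _) := by
      apply Matrix.ext
      intro p j
      show X _ = X _
      congr 1
      funext k
      rcases eq_or_ne k m with h | h
      · subst h
        simp only [modeUnfold, subTensor, selF, Matrix.submatrix_apply, Matrix.of_apply,
          dif_pos rfl, dif_neg hm, Equiv.refl_apply, finCongr_apply]
        apply Fin.ext
        simp
        rfl
      · simp only [modeUnfold, subTensor, Matrix.submatrix_apply, Matrix.of_apply,
          dif_neg h, Equiv.refl_apply, finCongr_apply]
        exact congrArg (selF n f k) (dif_neg h)
    rw [hYm, myrank_submatrix_equiv]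
    refine myrank_cols_eq _ _ ?_
    apply le_antisymm
    · apply span_le.2
      rintro _ ⟨j, rfl⟩
      exact subset_span ⟨fun k => selF n f k.1 (j k), rfl⟩
    · apply span_le.2
      rintro _ ⟨j₀, rfl⟩
      have hp' : modeUnfold X n (j₀ ⟨n, Ne.symm hm⟩)
          ∈ span ℝ (Set.range (fun q => modeUnfold X n (f q))) := by
        rw [hfspan]; exact subset_span (mem_range_self _)
      rw [mem_span_range_iff_exists_fun] at hp'
      obtain ⟨c, hc⟩ := hp'
      have hkey : (modeUnfold X m)ᵀ j₀ = ∑ q, c q •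
          ((modeUnfold X m).submatrix id (fun j (k : {k : Fin N // k ≠ m}) => selF n f k.1 (j k)))ᵀ
            (fun k => if h : k.1 = n
              then Fin.cast (show (modeUnfold X n).rank = Jshape I n _ k.1 by
                rw [h, Jshape_n]) q
              else Fin.cast (Jshape_ne _ h).symm (j₀ k)) := by
        funext p
        have hc' := congrFun hc (fun k : {k : Fin N // k ≠ n} =>
          if h : k.1 = m then Fin.cast (congrArg I h).symm p else j₀ ⟨k.1, h⟩)
        simp only [Finset.sum_apply, Pi.smul_apply, smul_eq_mul] at hc'
        simp only [Matrix.transpose_apply, Finset.sum_apply, Pi.smul_apply, smul_eq_mul,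
          Matrix.submatrix_apply, id_eq]
        have e1 : modeUnfold X m p j₀ = modeUnfold X n (j₀ ⟨n, Ne.symm hm⟩)
            (fun k : {k : Fin N // k ≠ n} =>
              if h : k.1 = m then Fin.cast (congrArg I h).symm p else j₀ ⟨k.1, h⟩) := by
          show X _ = X _
          congr 1
          funext k
          rcases eq_or_ne k m with h | h
          · subst h
            simp only [modeUnfold, Matrix.of_apply, dif_pos rfl, dif_neg hm]
            try (apply Fin.ext; simp)
          · rcases eq_or_ne k n with h' | h'
            · subst h'
              simp only [modeUnfold, Matrix.of_apply, dif_pos rfl, dif_neg h]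
              try (apply Fin.ext; simp)
            · simp only [modeUnfold, Matrix.of_apply, dif_neg h, dif_neg h']
        rw [e1, ← hc']
        refine Finset.sum_congr rfl fun q _ => ?_
        congr 1
        show X _ = X _
        congr 1
        funext k
        rcases eq_or_ne k m with h | h
        · subst h
          simp only [modeUnfold, Matrix.of_apply, selF, dif_pos rfl, dif_neg hm]
          try (apply Fin.ext; simp)
        · rcases eq_or_ne k n with h' | h'
          · subst h'
            simp only [modeUnfold, Matrix.of_apply, selF, dif_pos rfl, dif_neg h]
            try (apply Fin.ext; simp)
            rfl
          · simp only [modeUnfold, Matrix.of_apply, selF, dif_neg h, dif_neg h']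
            try (apply Fin.ext; simp)
            rfl
      rw [hkey]
      exact Submodule.sum_mem _ fun q _ =>
        Submodule.smul_mem _ _ (subset_span (mem_range_self _))

/-- For the max Tucker rank and for the submax Tucker rank: any nonzero tensor
`X` has a subtensor `Y` with `r X = r Y = Jₙ` for some mode `n`, where `J` is
the shape of `Y`. -/
theorem tucker_rank_attained_on_subtensor (r : RankFun)
    (hr : r = maxTuckerRank ∨ r = submaxRank)
    (N : ℕ) (hN : 0 < N) (I : Fin N → ℕ) (X : Tensor N I) (hX : X ≠ 0) :
    ∃ (J : Fin N → ℕ) (Y : Tensor N J), IsSubtensor Y X ∧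
      ∃ n : Fin N, r N I X = r N J Y ∧ r N J Y = J n := by
  classical
  rcases hr with rfl | rfl
  · -- max Tucker rank
    have hne : (Finset.univ : Finset (Fin N)).Nonempty := ⟨⟨0, hN⟩, Finset.mem_univ _⟩
    obtain ⟨n₀, -, hn₀⟩ :=
      Finset.exists_mem_eq_sup Finset.univ hne (fun m => (modeUnfold X m).rank)
    obtain ⟨J, Y, hsub, hJn, hranks⟩ := key_subtensor X n₀
    have hYX : maxTuckerRank N J Y = maxTuckerRank N I X :=
      Finset.sup_congr rfl (fun m _ => hranks m)
    exact ⟨J, Y, hsub, n₀, hYX.symm, by rw [hYX]; show _ = J n₀; rw [hJn]; exact hn₀⟩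
  · -- submax rank
    have hcard : (Multiset.map (fun m => (modeUnfold X m).rank)
        (Finset.univ : Finset (Fin N)).val).card = N := by simp
    have hs0 : (Multiset.map (fun m => (modeUnfold X m).rank)
        (Finset.univ : Finset (Fin N)).val) ≠ 0 := by
      intro h0
      rw [h0] at hcard
      simp at hcard
      omega
    have hmem : ∃ n₀ : Fin N, (modeUnfold X n₀).rank = submaxRank N I X := by
      by_cases hN1 : N ≤ 1
      · have hv : submaxRank N I X = (Multiset.map (fun m => (modeUnfold X m).rank)
            (Finset.univ : Finset (Fin N)).val).sup := by
          simp only [submaxRank, if_pos hN1]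
        have := Multiset.sup_mem_of_ne_zero hs0
        rw [Multiset.mem_map] at this
        obtain ⟨n₀, -, hn₀⟩ := this
        exact ⟨n₀, by rw [hn₀, hv]⟩
      · set s := Multiset.map (fun m => (modeUnfold X m).rank)
          (Finset.univ : Finset (Fin N)).val with hsdef
        have hv : submaxRank N I X = (s.erase s.sup).sup := by
          simp only [submaxRank, if_neg hN1]
          rfl
        have herase0 : s.erase s.sup ≠ 0 := by
          intro h0
          have := Multiset.card_erase_of_mem (Multiset.sup_mem_of_ne_zero hs0)
          rw [h0] at this
          simp only [Multiset.card_zero, Nat.pred_eq_sub_one] at this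
          omega
        have hmem' : (s.erase s.sup).sup ∈ s :=
          Multiset.mem_of_mem_erase (Multiset.sup_mem_of_ne_zero herase0)
        rw [hsdef, Multiset.mem_map] at hmem'
        obtain ⟨n₀, -, hn₀⟩ := hmem'
        exact ⟨n₀, by rw [hn₀, hv]⟩
    obtain ⟨n₀, hn₀⟩ := hmem
    obtain ⟨J, Y, hsub, hJn, hranks⟩ := key_subtensor X n₀
    have hmap : (Multiset.map (fun m => (modeUnfold Y m).rank)
        (Finset.univ : Finset (Fin N)).val)
        = Multiset.map (fun m => (modeUnfold X m).rank)
          (Finset.univ : Finset (Fin N)).val :=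
      Multiset.map_congr rfl (fun m _ => hranks m)
    have hYX : submaxRank N J Y = submaxRank N I X := by
      simp only [submaxRank]
      rw [hmap]
    exact ⟨J, Y, hsub, n₀, hYX.symm, by rw [hYX, ← hn₀]; exact hJn.symm⟩
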